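/- Let v₀ = 0, v_i = ϖ_i/n_i (1 ≤ i ≤ l) be the vertices of the fundamental alcove, let i ∈ J (so n_i = 1), let w₀ be the longest element of W and w_i the longest element of the parabolic subgroup of W generated by the simple reflections s_j for j ≠ i. Let σ_i be the permutation of {0,1,...,l} determined by τ(ϖ_i)∘w_i∘w₀(v_k) = v_{σ_i(k)} for all k. Then sign(σ_i) = (−1)^{ℓ(w_i w₀)}. -/

import Mathlib

open Module Matrix


section auxlemmas

variable {V : Type*} [AddCommGroup V] [Module ℝ V] {l : ℕ}





lemma exists_aux_basis (ϖ : Basis (Fin l) ℝ V) (d r : Fin l → ℝ) (hd : ∀ k, d k ≠ 0) :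
    ∃ B : Basis (Fin (l + 1)) ℝ (ℝ × V), B 0 = ((1 : ℝ), (0 : V)) ∧
      ∀ k : Fin l, B k.succ = (r k, d k • ϖ k) := by
  set z : Fin (l + 1) → ℝ × V :=
    fun m => Fin.cases ((1 : ℝ), (0 : V)) (fun k => (r k, d k • ϖ k)) m with hzdef
  have hz0 : z 0 = ((1:ℝ), (0:V)) := rfl
  have hzs : ∀ k : Fin l, z k.succ = (r k, d k • ϖ k) := fun k => rfl
  have hli : LinearIndependent ℝ z := by
    rw [Fintype.linearIndependent_iff]
    intro c hc
    have h2 : ∑ m, c m • (z m).2 = 0 := by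
      have := congrArg Prod.snd hc
      simpa [Prod.snd_sum] using this
    have h1 : ∑ m, c m • (z m).1 = 0 := by
      have := congrArg Prod.fst hc
      simpa [Prod.fst_sum] using this
    rw [Fin.sum_univ_succ] at h2
    simp only [hz0, hzs, smul_zero, zero_add, smul_smul] at h2
    have hcs : ∀ k : Fin l, c k.succ = 0 := by
      have := Fintype.linearIndependent_iff.mp ϖ.linearIndependent
        (fun k => c k.succ * d k) h2
      intro k
      rcases mul_eq_zero.mp (this k) with h | h
      · exact h
      · exact absurd h (hd k)
    have hc0 : c 0 = 0 := by
      rw [Fin.sum_univ_succ] at h1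
      simp only [hz0, hzs, smul_eq_mul, mul_one, hcs, zero_mul,
        Finset.sum_const_zero, add_zero] at h1
      exact h1
    intro m
    induction m using Fin.cases with
    | zero => exact hc0
    | succ k => exact hcs k
  have hsp : ⊤ ≤ Submodule.span ℝ (Set.range z) := by
    rintro ⟨t, x⟩ -
    have hx : ∑ k, ϖ.repr x k • ϖ k = x := ϖ.sum_repr x
    set e : Fin l → ℝ := fun k => ϖ.repr x k / d k with he
    have hrepr : (t, x) = (t - ∑ k, e k * r k) • z 0 + ∑ k, e k • z k.succ := by
      rw [Prod.ext_iff]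
      constructor
      · simp [hz0, hzs, Prod.fst_sum]
      · simp [hz0, hzs, Prod.snd_sum, smul_smul]
        rw [← hx]
        refine Finset.sum_congr rfl fun k _ => ?_
        rw [he, div_mul_cancel₀ _ (hd k)]
    rw [hrepr]
    refine Submodule.add_mem _ (Submodule.smul_mem _ _ (Submodule.subset_span ⟨0, rfl⟩)) ?_
    exact Submodule.sum_mem _ fun k _ =>
      Submodule.smul_mem _ _ (Submodule.subset_span ⟨k.succ, rfl⟩)
  exact ⟨Basis.mk hli hsp, by simp [Basis.mk_apply, hz0], fun k => by simp [Basis.mk_apply, hzs]⟩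





lemma det_reflection_aux (ϖ : Basis (Fin l) ℝ V) (f : Module.Dual ℝ V) (y : V)
    (h : f y = 2) (k : Fin l) (hf : ∀ m, f (ϖ m) = if m = k then 1 else 0) :
    LinearMap.det ((Module.reflection h).toLinearMap) = -1 := by
  classical
  rw [← LinearMap.det_toMatrix ϖ]
  have hM : LinearMap.toMatrix ϖ ϖ (Module.reflection h).toLinearMap =
      Matrix.updateCol 1 k (fun m => (if m = k then (1:ℝ) else 0) - ϖ.repr y m) := by
    ext m j
    rw [LinearMap.toMatrix_apply, LinearEquiv.coe_coe, Module.reflection_apply]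
    by_cases hjk : j = k
    · subst hjk
      simp [Matrix.updateCol_apply, hf, map_sub, Finsupp.single_apply, eq_comm]
    · simp [Matrix.updateCol_apply, hjk, hf, map_sub, Matrix.one_apply,
        Finsupp.single_apply, eq_comm]
  rw [hM, ← Matrix.cramer_apply, Matrix.cramer_one]
  have hyy : ϖ.repr y k = f y := by
    have : f = ϖ.coord k := by
      refine ϖ.ext fun m => ?_
      simp [hf, Basis.coord_apply, Finsupp.single_apply, eq_comm]
    rw [this, Basis.coord_apply]
  simp [hyy, h]
  norm_num




lemma det_rho_aux (Mat : CoxeterMatrix (Fin l)) {W : Type*} [Group W]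
    (cs : CoxeterSystem Mat W) (ρ : W →* (V ≃ₗ[ℝ] V))
    (hdet : ∀ k, LinearMap.det ((ρ (cs.simple k)).toLinearMap) = -1) (w : W) :
    LinearMap.det ((ρ w).toLinearMap) = (-1 : ℝ) ^ (cs.length w) := by
  obtain ⟨ω, hω, rfl⟩ := cs.exists_reduced_word w
  rw [show cs.length (cs.wordProd ω) = ω.length from hω]; clear hω
  induction ω with
  | nil => simp [CoxeterSystem.wordProd_nil]
  | cons k ω ih =>
    rw [CoxeterSystem.wordProd_cons, _root_.map_mul ρ, LinearEquiv.coe_toLinearMap_mul,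
      _root_.map_mul LinearMap.det, hdet k, ih, List.length_cons, pow_succ]
    ring


end auxlemmas



/-- Lemma `tec`: Let `v₀ = 0`, `v_k = ϖ_k / n_k` (`1 ≤ k ≤ l`) be the
vertices of the fundamental alcove of a reduced irreducible root system of rank `l`
(simple roots `α_k`, fundamental coweights `ϖ_k` forming a basis of `V`, highest-root
coefficients `n_k`).  Let `i ∈ J` (i.e. `n_i = 1`), let `w₀` be the longest element of
the Weyl group `W` and `w_i` the longest element of the standard parabolic subgroup of
`W` generated by the simple reflections `s_j`, `j ≠ i`.  If `σ_i` is the permutation of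
`{0, 1, …, l}` determined by `τ(ϖ_i) ∘ w_i ∘ w₀ (v_k) = v_{σ_i(k)}` for all `k`, then
`sign(σ_i) = (−1)^{ℓ(w_i w₀)}`. -/
theorem sign_sigma_eq_neg_one_pow_length
    {V : Type*} [AddCommGroup V] [Module ℝ V] {l : ℕ}
    (α : Fin l → Module.Dual ℝ V) (ϖ : Basis (Fin l) ℝ V)
    (hdual : ∀ k j, α j (ϖ k) = if k = j then 1 else 0)
    (n : Fin l → ℕ) (hn : ∀ k, 1 ≤ n k)
    -- the Weyl group `W`, acting on `V` with the simple reflections acting as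
    -- the orthogonal reflections `s_{α_k}` (with respect to coroots `c k`):
    (Mat : CoxeterMatrix (Fin l)) {W : Type*} [Group W] (cs : CoxeterSystem Mat W)
    (ρ : W →* (V ≃ₗ[ℝ] V)) (c : Fin l → V) (h2 : ∀ k, α k (c k) = 2)
    (hρ : ∀ k, ρ (cs.simple k) = Module.reflection (h2 k))
    -- the vertices of the fundamental alcove:
    (v : Fin (l + 1) → V) (hv0 : v 0 = 0)
    (hv : ∀ k : Fin l, v k.succ = ((n k : ℝ))⁻¹ • ϖ k)
    -- `i ∈ J`, the longest elements `w₀` and `w_i`: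
    (i : Fin l) (hi : n i = 1)
    (w0 : W) (hw0 : ∀ w, cs.length w ≤ cs.length w0)
    (wi : W) (hwiMem : wi ∈ Subgroup.closure (cs.simple '' {j | j ≠ i}))
    (hwi : ∀ w ∈ Subgroup.closure (cs.simple '' {j | j ≠ i}),
      cs.length w ≤ cs.length wi)
    -- the permutation `σ_i` of the vertices induced by `τ(ϖ_i) ∘ w_i ∘ w₀`:
    (σ : Equiv.Perm (Fin (l + 1)))
    (hσ : ∀ k, ρ (wi * w0) (v k) + ϖ i = v (σ k)) :
    Equiv.Perm.sign σ = (-1 : ℤˣ) ^ (cs.length (wi * w0)) := by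
  classical
  set g : V ≃ₗ[ℝ] V := ρ (wi * w0) with hgdef
  have hdets : ∀ k, LinearMap.det ((ρ (cs.simple k)).toLinearMap) = -1 := by
    intro k
    rw [hρ k]
    exact det_reflection_aux ϖ (α k) (c k) (h2 k) k (fun m => hdual m k)
  have hdetg : LinearMap.det (g.toLinearMap) = (-1 : ℝ) ^ (cs.length (wi * w0)) :=
    det_rho_aux Mat cs ρ hdets (wi * w0)
  -- the affine map in homogeneous coordinates
  set G : (ℝ × V) →ₗ[ℝ] (ℝ × V) :=
    LinearMap.prod (LinearMap.fst ℝ ℝ V)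
      (g.toLinearMap ∘ₗ LinearMap.snd ℝ ℝ V + (LinearMap.fst ℝ ℝ V).smulRight (ϖ i))
    with hGdef
  have hG : ∀ (t : ℝ) (x : V), G (t, x) = (t, g x + t • ϖ i) := fun t x => rfl
  -- the basis of vertices
  have hnne : ∀ k : Fin l, ((n k : ℝ))⁻¹ ≠ 0 := fun k =>
    inv_ne_zero (Nat.cast_ne_zero.mpr (Nat.one_le_iff_ne_zero.mp (hn k)))
  obtain ⟨u, hu0, hus⟩ := exists_aux_basis ϖ (fun k => ((n k : ℝ))⁻¹) (fun _ => 1) hnne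
  have huk : ∀ k : Fin (l + 1), u k = (1, v k) := by
    intro k
    induction k using Fin.cases with
    | zero => rw [hu0, hv0]
    | succ k => rw [hus k, hv k]
  have hGu : ∀ k, G (u k) = u (σ k) := by
    intro k
    rw [huk k, huk (σ k), hG, one_smul, hσ k]
  -- the product basis
  obtain ⟨b, hb0, hbs'⟩ := exists_aux_basis ϖ (fun _ => (1 : ℝ)) (fun _ => 0)
    (fun _ => one_ne_zero)
  have hbs : ∀ k : Fin l, b k.succ = ((0 : ℝ), ϖ k) := by
    intro k; rw [hbs' k, one_smul]
  -- determinant computed in the vertex basis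
  have hMu : LinearMap.toMatrix u u G = (σ⁻¹).permMatrix ℝ := by
    ext m k
    rw [LinearMap.toMatrix_apply, hGu k, Basis.repr_self]
    have hiff : (σ k = m) ↔ (σ⁻¹ m = k) := by
      constructor
      · rintro rfl; exact σ.symm_apply_apply k
      · rintro rfl; exact σ.apply_symm_apply m
    simp only [Finsupp.single_apply, Equiv.Perm.permMatrix, PEquiv.toMatrix_apply,
      Equiv.toPEquiv_apply, Option.mem_def, Option.some_inj]
    by_cases hmk : σ k = m
    · rw [if_pos hmk, if_pos (hiff.mp hmk)]
    · rw [if_neg hmk, if_neg (fun hh => hmk (hiff.mpr hh))]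
  have hdet_u : LinearMap.det G = ((Equiv.Perm.sign σ : ℤ) : ℝ) := by
    rw [← LinearMap.det_toMatrix u, hMu, Matrix.det_permutation, Equiv.Perm.sign_inv]
  -- determinant computed in the product basis
  set A := LinearMap.toMatrix ϖ ϖ g.toLinearMap with hAdef
  set M := LinearMap.toMatrix b b G with hMdef
  have hGb0 : G (b 0) = b 0 + b i.succ := by
    rw [hb0, hbs i]
    rw [hG]
    simp [Prod.ext_iff]
  have hgsum : ∀ j : Fin l, g (ϖ j) = ∑ m, A m j • ϖ m := by
    intro j
    conv_lhs => rw [← ϖ.sum_repr (g (ϖ j))]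
    refine Finset.sum_congr rfl fun m _ => ?_
    rw [hAdef, LinearMap.toMatrix_apply, LinearEquiv.coe_coe]
  have hGbs : ∀ j : Fin l, G (b j.succ) = ∑ m, A m j • b m.succ := by
    intro j
    rw [hbs j, hG]
    rw [Prod.ext_iff]
    constructor
    · simp [hbs, Prod.fst_sum]
    · simp [hbs, Prod.snd_sum, hgsum j]
  have hM00 : M 0 0 = 1 := by
    rw [hMdef, LinearMap.toMatrix_apply, hGb0]
    simp [Basis.repr_self, Finsupp.single_apply, (Fin.succ_ne_zero i)]
  have hM0s : ∀ j : Fin l, M 0 j.succ = 0 := by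
    intro j
    rw [hMdef, LinearMap.toMatrix_apply, hGbs j]
    simp [Basis.repr_self, Finsupp.single_apply, Fin.succ_ne_zero]
  have hMss : ∀ m j : Fin l, M m.succ j.succ = A m j := by
    intro m j
    rw [hMdef, LinearMap.toMatrix_apply, hGbs j]
    simp [Basis.repr_self, Finsupp.single_apply, Fin.succ_inj]
  have hdet_b : M.det = A.det := by
    rw [Matrix.det_succ_row_zero]
    rw [Finset.sum_eq_single 0]
    · have hsub : M.submatrix Fin.succ (Fin.succAbove 0) = A := by
        ext m j
        rw [Fin.succAbove_zero, Matrix.submatrix_apply, hMss m j]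
      rw [hM00, hsub]
      simp
    · intro j _ hj
      obtain ⟨j', rfl⟩ := Fin.eq_succ_of_ne_zero hj
      rw [hM0s j']
      ring
    · simp
  have key : ((Equiv.Perm.sign σ : ℤ) : ℝ) = (-1 : ℝ) ^ (cs.length (wi * w0)) := by
    rw [← hdet_u, ← LinearMap.det_toMatrix b, ← hMdef, hdet_b, hAdef,
      LinearMap.det_toMatrix, hdetg]
  have key2 : ((Equiv.Perm.sign σ : ℤ) : ℝ) =
      ((((-1 : ℤˣ) ^ (cs.length (wi * w0)) : ℤˣ) : ℤ) : ℝ) := by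
    rw [key]
    push_cast
    ring
  have key3 : ((Equiv.Perm.sign σ : ℤˣ) : ℤ) = (((-1 : ℤˣ) ^ (cs.length (wi * w0)) : ℤˣ) : ℤ) := by
    exact_mod_cast key2
  exact Units.ext key3
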